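/- Let G be the 2(m+1) × 2(m+1) block matrix G = [[I, -Γ†],[Γ, I]] where Γ is an (m+1)×(m+1) lower-triangular Toeplitz matrix with complex entries and I is the identity. If (u,v)ᵀ solves G(u,v)ᵀ = e₁ (first standard basis vector), then (-v‡, u‡)ᵀ solves G(-v‡,u‡)ᵀ = e_{2m+2} (last standard basis vector), where x‡ denotes the vector x with entries reversed in order and complex-conjugated. -/
import Mathlib


open Matrix

/-- Persymmetry of the block-Toeplitz GLM system matrix. Let
`G = [[I, -Γ†],[Γ, I]]` with `Γ` a lower-triangular Toeplitz `(m+1)×(m+1)` complex matrix.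
If `(u,v)ᵀ` solves `G(u,v)ᵀ = e₁`, then `(-v‡, u‡)ᵀ` solves `G(-v‡,u‡)ᵀ = e_last`, where
`x‡` reverses the order of entries and conjugates them. -/
theorem toeplitz_block_persymmetry
    (m : ℕ) (ω : ℕ → ℂ)
    (Γ : Matrix (Fin (m + 1)) (Fin (m + 1)) ℂ)
    (hΓ : ∀ j k : Fin (m + 1), Γ j k = if (k : ℕ) ≤ (j : ℕ) then ω ((j : ℕ) - (k : ℕ)) else 0)
    (G : Matrix (Fin (m + 1) ⊕ Fin (m + 1)) (Fin (m + 1) ⊕ Fin (m + 1)) ℂ)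
    (hG : G = Matrix.fromBlocks 1 (-Γ.conjTranspose) Γ 1)
    (u v : Fin (m + 1) → ℂ)
    (huv : G.mulVec (Sum.elim u v) = Pi.single (Sum.inl 0) 1) :
    G.mulVec (Sum.elim (fun i => -((starRingEnd ℂ) (v (Fin.rev i))))
        (fun i => (starRingEnd ℂ) (u (Fin.rev i))))
      = Pi.single (Sum.inr (Fin.last m)) 1 := by
  subst hG
  -- persymmetry of Γ
  have key1 : ∀ i j : Fin (m + 1), Γ (Fin.rev i) j = Γ (Fin.rev j) i := by
    intro i j
    rw [hΓ, hΓ]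
    have hi := i.isLt; have hj := j.isLt
    simp only [Fin.val_rev]
    rcases le_or_gt ((j:ℕ)) (m + 1 - ((i:ℕ)+1)) with h | h
    · rw [if_pos h, if_pos (by omega), Nat.sub_sub, Nat.sub_sub]
      congr 1; omega
    · rw [if_neg (by omega), if_neg (by omega)]
  have key2 : ∀ i j : Fin (m + 1), Γ i (Fin.rev j) = Γ j (Fin.rev i) := by
    intro i j
    rw [hΓ, hΓ]
    have hi := i.isLt; have hj := j.isLt
    simp only [Fin.val_rev]
    rcases le_or_gt (m + 1 - ((j:ℕ)+1)) ((i:ℕ)) with h | h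
    · rw [if_pos h, if_pos (by omega)]
      congr 1; omega
    · rw [if_neg (by omega), if_neg (by omega)]
  rw [Matrix.fromBlocks_mulVec] at huv
  rw [Matrix.fromBlocks_mulVec]
  simp only [Sum.elim_comp_inl, Sum.elim_comp_inr]
  have h1 : ∀ i, u i - Γ.conjTranspose.mulVec v i = if i = 0 then 1 else 0 := by
    intro i
    have := congrFun huv (Sum.inl i)
    simp only [Sum.elim_inl, Pi.add_apply, Matrix.one_mulVec, Matrix.neg_mulVec,
      Pi.neg_apply] at this
    rw [Pi.single_apply] at this
    simpa [sub_eq_add_neg, Sum.inl.injEq] using this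
  have h2 : ∀ i, Γ.mulVec u i + v i = 0 := by
    intro i
    have := congrFun huv (Sum.inr i)
    simp only [Sum.elim_inr, Pi.add_apply, Matrix.one_mulVec, Matrix.neg_mulVec] at this
    rw [Pi.single_apply] at this
    simpa using this
  funext x
  cases x with
  | inl i =>
      simp only [Sum.elim_inl, Pi.add_apply, Matrix.one_mulVec, Matrix.neg_mulVec,
        Pi.neg_apply]
      rw [Pi.single_apply]
      simp only [reduceCtorEq, if_false]
      -- goal: -conj (v (rev i)) + -(Γ†.mulVec u‡) i = 0
      have : Γ.conjTranspose.mulVec (fun j => (starRingEnd ℂ) (u (Fin.rev j))) i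
          = -((starRingEnd ℂ) (v (Fin.rev i))) := by
        have h2' := h2 (Fin.rev i)
        have : Γ.mulVec u (Fin.rev i) = -v (Fin.rev i) := by linear_combination h2'
        calc Γ.conjTranspose.mulVec (fun j => (starRingEnd ℂ) (u (Fin.rev j))) i
            = ∑ j, (starRingEnd ℂ) (Γ j i * u (Fin.rev j)) := by
              simp [Matrix.mulVec, dotProduct, Matrix.conjTranspose_apply, _root_.map_mul]
          _ = (starRingEnd ℂ) (∑ j, Γ j i * u (Fin.rev j)) := by rw [map_sum]
          _ = (starRingEnd ℂ) (∑ j, Γ (Fin.rev j) i * u j) := by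
              congr 1
              exact (Fintype.sum_equiv (Fin.revPerm) _ _ (by
                intro j; simp [Fin.rev_rev])).symm
          _ = (starRingEnd ℂ) (∑ j, Γ (Fin.rev i) j * u j) := by
              congr 1; exact Finset.sum_congr rfl (fun j _ => by rw [key1])
          _ = (starRingEnd ℂ) (Γ.mulVec u (Fin.rev i)) := by
              simp [Matrix.mulVec, dotProduct]
          _ = -((starRingEnd ℂ) (v (Fin.rev i))) := by rw [this]; simp
      rw [this]; ring
  | inr i =>
      simp only [Sum.elim_inr, Pi.add_apply, Matrix.one_mulVec]
      rw [Pi.single_apply]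
      simp only [Sum.inr.injEq]
      have hrev : Γ.mulVec (fun j => -((starRingEnd ℂ) (v (Fin.rev j)))) i
          = -((starRingEnd ℂ) (Γ.conjTranspose.mulVec v (Fin.rev i))) := by
        calc Γ.mulVec (fun j => -((starRingEnd ℂ) (v (Fin.rev j)))) i
            = -∑ j, (starRingEnd ℂ) ((starRingEnd ℂ) (Γ i j) * v (Fin.rev j)) := by
              simp [Matrix.mulVec, dotProduct, _root_.map_mul, Complex.conj_conj,
                mul_neg, Finset.sum_neg_distrib]
          _ = -((starRingEnd ℂ) (∑ j, (starRingEnd ℂ) (Γ i j) * v (Fin.rev j))) := by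
              rw [map_sum]
          _ = -((starRingEnd ℂ) (∑ j, (starRingEnd ℂ) (Γ i (Fin.rev j)) * v j)) := by
              congr 2
              exact (Fintype.sum_equiv (Fin.revPerm) _ _ (by
                intro j; simp [Fin.rev_rev])).symm
          _ = -((starRingEnd ℂ) (∑ j, (starRingEnd ℂ) (Γ j (Fin.rev i)) * v j)) := by
              congr 2; exact Finset.sum_congr rfl (fun j _ => by rw [key2])
          _ = -((starRingEnd ℂ) (Γ.conjTranspose.mulVec v (Fin.rev i))) := by
              simp [Matrix.mulVec, dotProduct, Matrix.conjTranspose_apply]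
      rw [hrev]
      have h1' := h1 (Fin.rev i)
      have hΓv : Γ.conjTranspose.mulVec v (Fin.rev i)
          = u (Fin.rev i) - (if Fin.rev i = 0 then 1 else 0) := by
        linear_combination -h1'
      rw [hΓv]
      have hif : (if Fin.rev i = 0 then (1:ℂ) else 0) = (if i = Fin.last m then 1 else 0) := by
        congr 1
        simp only [eq_iff_iff]
        constructor
        · intro h; have := congrArg Fin.rev h; simpa [Fin.rev_rev, Fin.rev_zero] using this
        · intro h; simp [h, Fin.rev_last]
      rw [hif]
      rcases eq_or_ne i (Fin.last m) with h | h
      · simp [h]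
      · simp [h]
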